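/- For an R-module N and nonnegative integer m, the L_n-injective dimension of N is at most m if and only if Ext^{m+1}_R(M,N)=0 for every R-module M of flat dimension at most n. -/

import Mathlib

open CategoryTheory

/-- Flatness of a module over an arbitrary (possibly noncommutative) ring,
via the equational criterion: every relation is a consequence of trivial relations. -/
def IsFlatMod (R : Type) [Ring R] (M : Type) [AddCommGroup M] [Module R M] : Prop :=
  ∀ (ι : Type) (_ : Fintype ι) (r : ι → R) (x : ι → M),
    (∑ i, r i • x i = 0) →
      ∃ (κ : Type) (_ : Fintype κ) (a : ι → κ → R) (y : κ → M),
        (∀ i, x i = ∑ j, a i j • y j) ∧ ∀ j, (∑ i, r i * a i j) = 0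


section AuxFlat

variable {R : Type} [Ring R]

section Flat

variable {M : Type} [AddCommGroup M] [Module R M]

lemma isFlatMod_of_subsingleton [Subsingleton M] : IsFlatMod R M := by
  intro ι _ r x _
  exact ⟨PEmpty, inferInstance, fun _ j => j.elim, fun j => j.elim,
    fun i => by simp [Subsingleton.elim (x i) 0], fun j => j.elim⟩

lemma isFlatMod_finsupp (σ : Type) : IsFlatMod R (σ →₀ R) := by
  intro ι _ r x hrel
  classical
  set S : Finset σ := Finset.univ.biUnion (fun i => (x i).support) with hS
  refine ⟨{s // s ∈ S}, inferInstance, fun i j => x i j.val,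
    fun j => Finsupp.single j.val 1, fun i => ?_, fun j => ?_⟩
  · ext s
    rw [Finsupp.finset_sum_apply]
    by_cases hs : s ∈ S
    · rw [Finset.sum_eq_single (⟨s, hs⟩ : {s // s ∈ S})]
      · simp
      · intro b _ hb
        simp only [Finsupp.smul_apply, Finsupp.single_apply]
        rw [if_neg (by simpa [eq_comm] using fun h => hb (Subtype.ext h.symm))]
        simp
      · simp
    · have hxs : x i s = 0 := by
        by_contra h
        exact hs (Finset.mem_biUnion.2 ⟨i, Finset.mem_univ i, Finsupp.mem_support_iff.2 h⟩)
      rw [hxs]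
      symm
      apply Finset.sum_eq_zero
      intro b _
      simp only [Finsupp.smul_apply, Finsupp.single_apply]
      rw [if_neg (by rintro rfl; exact hs b.2)]
      simp
  · have := congrArg (fun f : σ →₀ R => f j.val) hrel
    simpa [Finsupp.finset_sum_apply] using this

lemma isFlatMod_prod {A B : Type} [AddCommGroup A] [Module R A] [AddCommGroup B] [Module R B]
    (hA : IsFlatMod R A) (hB : IsFlatMod R B) : IsFlatMod R (A × B) := by
  intro ι _ r x hrel
  obtain ⟨κ₁, _, a, y, hy1, hy2⟩ := hA ι ‹_› r (fun i => (x i).1)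
    (by have := congrArg Prod.fst hrel; simpa [Prod.fst_sum] using this)
  obtain ⟨κ₂, _, b, z, hz1, hz2⟩ := hB ι ‹_› r (fun i => (x i).2)
    (by have := congrArg Prod.snd hrel; simpa [Prod.snd_sum] using this)
  refine ⟨κ₁ ⊕ κ₂, inferInstance, fun i => Sum.elim (a i) (b i),
    Sum.elim (fun j => ((y j : A), (0 : B))) (fun j => ((0 : A), (z j : B))), fun i => ?_, fun j => ?_⟩
  · have h1 := hy1 i
    have h2 := hz1 i
    rw [Fintype.sum_sum_type]
    ext
    · simpa [Prod.fst_sum] using h1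
    · simpa [Prod.snd_sum] using h2
  · cases j with
    | inl j => simpa using hy2 j
    | inr j => simpa using hz2 j

lemma IsFlatMod.multi (hM : IsFlatMod R M) :
    ∀ (t : ℕ) (ι : Type) (_ : Fintype ι) (c : Fin t → ι → R) (x : ι → M),
    (∀ s, ∑ i, c s i • x i = 0) →
      ∃ (κ : Type) (_ : Fintype κ) (a : ι → κ → R) (y : κ → M),
        (∀ i, x i = ∑ j, a i j • y j) ∧ ∀ s j, (∑ i, c s i * a i j) = 0 := by
  intro t
  induction t with
  | zero =>
    intro ι _ c x _
    classical
    exact ⟨ι, ‹_›, fun i j => if i = j then 1 else 0, x,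
      fun i => by simp [ite_smul], fun s => s.elim0⟩
  | succ t ih =>
    intro ι _ c x hrel
    obtain ⟨κ₁, _, a, y, hy1, hy2⟩ := hM ι ‹_› (c 0) x (hrel 0)
    obtain ⟨κ₂, _, b, z, hz1, hz2⟩ := ih κ₁ ‹_›
      (fun s j => ∑ i, c s.succ i * a i j) y (by
        intro s
        calc ∑ j, (∑ i, c s.succ i * a i j) • y j
            = ∑ i, c s.succ i • (∑ j, a i j • y j) := by
              simp only [Finset.smul_sum, Finset.sum_smul, mul_smul]
              exact Finset.sum_comm
          _ = ∑ i, c s.succ i • x i := by simp [← hy1]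
          _ = 0 := hrel s.succ)
    refine ⟨κ₂, ‹_›, fun i l => ∑ j, a i j * b j l, z, fun i => ?_, fun s l => ?_⟩
    · calc x i = ∑ j, a i j • y j := hy1 i
        _ = ∑ j, a i j • (∑ l, b j l • z l) := by simp [← hz1]
        _ = ∑ l, (∑ j, a i j * b j l) • z l := by
            simp only [Finset.smul_sum, Finset.sum_smul, mul_smul]
            exact Finset.sum_comm
    · refine Fin.cases ?_ ?_ s
      · calc ∑ i, c 0 i * ∑ j, a i j * b j l
            = ∑ j, (∑ i, c 0 i * a i j) * b j l := by
              simp only [Finset.mul_sum, Finset.sum_mul, mul_assoc]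
              exact Finset.sum_comm
          _ = 0 := by simp [hy2]
      · intro s
        calc ∑ i, c s.succ i * ∑ j, a i j * b j l
            = ∑ j, (∑ i, c s.succ i * a i j) * b j l := by
              simp only [Finset.mul_sum, Finset.sum_mul, mul_assoc]
              exact Finset.sum_comm
          _ = 0 := hz2 s l

/-- The kernel of a surjection from a flat module onto a flat module is flat. -/
lemma isFlatMod_ker {X F : Type} [AddCommGroup X] [Module R X] [AddCommGroup F] [Module R F]
    (hX : IsFlatMod R X) (hF : IsFlatMod R F) (φ : X →ₗ[R] F) (hφ : Function.Surjective φ) :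
    IsFlatMod R (LinearMap.ker φ) := by
  intro ι _ r x hrel
  classical
  -- relation in X
  obtain ⟨κ, _, a, y, hy1, hy2⟩ := hX ι ‹_› r (fun i => (x i : X)) (by
    have := congrArg (Submodule.subtype _) hrel
    simpa using this)
  -- relations on the images in F, indexed by ι ≃ Fin (card ι)
  let e := Fintype.equivFin ι
  obtain ⟨κ₂, _, b, g, hg1, hg2⟩ := hF.multi (Fintype.card ι) κ ‹_›
    (fun s j => a (e.symm s) j) (fun j => φ (y j)) (by
      intro s
      calc ∑ j, a (e.symm s) j • φ (y j) = φ (∑ j, a (e.symm s) j • y j) := by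
            simp [map_sum]
        _ = φ (x (e.symm s) : X) := by rw [← hy1]
        _ = 0 := (x (e.symm s)).2)
  choose w hw using hφ
  set y' : κ → X := fun j => y j - ∑ l, b j l • w (g l) with hy'
  have hy'K : ∀ j, y' j ∈ LinearMap.ker φ := by
    intro j
    simp only [hy', LinearMap.mem_ker, map_sub, map_sum, map_smul, hw]
    rw [hg1 j]
    simp
  refine ⟨κ, ‹_›, a, fun j => ⟨y' j, hy'K j⟩, fun i => ?_, hy2⟩
  · have : (x i : X) = ∑ j, a i j • y' j := by
      simp only [hy', smul_sub]
      rw [Finset.sum_sub_distrib, hy1 i]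
      have : ∑ j, a i j • ∑ l, b j l • w (g l)
          = ∑ l, (∑ j, a i j * b j l) • w (g l) := by
        simp only [Finset.smul_sum, Finset.sum_smul, mul_smul]
        exact Finset.sum_comm
      rw [this]
      have h0 : ∀ l, (∑ j, a i j * b j l) = 0 := by
        intro l
        have := hg2 (e i) l
        simpa using this
      simp [h0]
    ext
    simpa using this

end Flat

end AuxFlat

variable (R : Type) [Ring R]


/-- `Ext^n_R(M, N) = 0`. -/
def extVanish (n : ℕ) (M N : ModuleCat.{0} R) : Prop :=
  Subsingleton (((Ext ℤ (ModuleCat.{0} R) n).obj (Opposite.op M)).obj N)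


/-- `M` has flat dimension at most `n`. -/
def fdLE : ℕ → ModuleCat.{0} R → Prop
  | 0, M => IsFlatMod R M
  | n+1, M => ∃ (K F : ModuleCat.{0} R) (f : K ⟶ F) (g : F ⟶ M),
      IsFlatMod R F ∧ Function.Injective f ∧ Function.Surjective g ∧
        Function.Exact f g ∧ fdLE n K


open Limits

section Aux2

variable {R : Type} [Ring R]

lemma isFlatMod_equiv {A B : Type} [AddCommGroup A] [Module R A] [AddCommGroup B] [Module R B]
    (e : A ≃ₗ[R] B) (hA : IsFlatMod R A) : IsFlatMod R B := by
  intro ι _ r x hrel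
  obtain ⟨κ, _, a, y, hy1, hy2⟩ := hA ι ‹_› r (fun i => e.symm (x i)) (by
    have : e.symm (∑ i, r i • x i) = e.symm 0 := by rw [hrel]
    simpa [map_sum] using this)
  refine ⟨κ, ‹_›, a, fun j => e (y j), fun i => ?_, hy2⟩
  have : e (e.symm (x i)) = e (∑ j, a i j • y j) := by rw [← hy1]
  simpa [map_sum] using this

lemma fdLE_congr {n : ℕ} {X Y : ModuleCat.{0} R} (e : ↑X ≃ₗ[R] ↑Y) (h : fdLE R n X) :
    fdLE R n Y := by
  cases n with
  | zero => exact isFlatMod_equiv e h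
  | succ n =>
    obtain ⟨K, F, f, g, hF, hf, hg, hfg, hK⟩ := h
    refine ⟨K, F, f, g ≫ ModuleCat.ofHom e.toLinearMap, hF, hf,
      e.surjective.comp hg, ?_, hK⟩
    intro x
    constructor
    · intro hx
      have hx' : e (g x) = 0 := hx
      have : g x = 0 := by
        apply e.injective
        rw [hx', map_zero]
      exact (hfg x).1 this
    · rintro ⟨k, rfl⟩
      have : g (f k) = 0 := (hfg (f k)).2 ⟨k, rfl⟩
      show e (g (f k)) = 0
      simp [this]

lemma fdLE_of_flat : ∀ (n : ℕ) {M : ModuleCat.{0} R}, IsFlatMod R ↑M → fdLE R n M := by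
  intro n
  induction n with
  | zero => intro M h; exact h
  | succ n ih =>
    intro M h
    refine ⟨ModuleCat.of R PUnit, M, (0 : ModuleCat.of R PUnit ⟶ M), 𝟙 M, h,
      ?_, Function.surjective_id, ?_, ih isFlatMod_of_subsingleton⟩
    · intro a b _; exact Subsingleton.elim a b
    · intro x
      constructor
      · intro hx
        exact ⟨0, by simp [show x = 0 from hx]⟩
      · rintro ⟨k, rfl⟩
        rfl

lemma fdLE_mono : ∀ {n : ℕ} {M : ModuleCat.{0} R}, fdLE R n M → fdLE R (n+1) M := by
  intro n
  induction n with
  | zero => intro M h; exact fdLE_of_flat 1 h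
  | succ n ih =>
    intro M h
    obtain ⟨K, F, f, g, hF, hf, hg, hfg, hK⟩ := h
    exact ⟨K, F, f, g, hF, hf, hg, hfg, ih hK⟩

lemma fdLE_prod {A : Type} [AddCommGroup A] [Module R A] (hA : IsFlatMod R A) :
    ∀ (n : ℕ) {K : ModuleCat.{0} R}, fdLE R n K → fdLE R n (ModuleCat.of R (A × ↑K)) := by
  intro n
  induction n with
  | zero => intro K h; exact isFlatMod_prod hA h
  | succ n ih =>
    intro K h
    obtain ⟨K₂, F₂, f, g, hF₂, hf, hg, hfg, hK₂⟩ := h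
    refine ⟨K₂, ModuleCat.of R (A × ↑F₂),
      (ModuleCat.ofHom (LinearMap.prod 0 f.hom) : K₂ ⟶ ModuleCat.of R (A × ↑F₂)),
      (ModuleCat.ofHom (LinearMap.prodMap LinearMap.id g.hom) : ModuleCat.of R (A × ↑F₂) ⟶ ModuleCat.of R (A × ↑K)),
      isFlatMod_prod hA hF₂, ?_, ?_, ?_, hK₂⟩
    · intro a b hab
      exact hf (congrArg Prod.snd hab)
    · rintro ⟨a, x⟩
      obtain ⟨u, hu⟩ := hg x
      exact ⟨(a, u), show (a, g u) = (a, x) by rw [hu]⟩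
    · rintro ⟨a, x⟩
      constructor
      · intro hx
        have ha : a = 0 := congrArg Prod.fst hx
        have hx2 : g x = 0 := congrArg Prod.snd hx
        obtain ⟨k, hk⟩ := (hfg x).1 hx2
        exact ⟨k, show ((0:A), f k) = (a, x) by rw [ha, hk]⟩
      · rintro ⟨k, hk⟩
        have ha : a = 0 := by simpa using (congrArg Prod.fst hk).symm
        have hx : f k = x := by simpa using congrArg Prod.snd hk
        have : g x = 0 := (hfg x).2 ⟨k, hx⟩
        show (a, g x) = (0, 0)
        simp [ha, this]

lemma fdLE_ker : ∀ (n : ℕ) {X F : ModuleCat.{0} R} (φ : X ⟶ F),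
    Function.Surjective φ → IsFlatMod R ↑F → fdLE R n X →
    fdLE R n (ModuleCat.of R (LinearMap.ker φ.hom)) := by
  intro n
  induction n with
  | zero =>
    intro X F φ hφ hF hX
    exact isFlatMod_ker hX hF φ.hom hφ
  | succ n ih =>
    intro X F φ hφ hF hX
    obtain ⟨K₂, F₂, f, g, hF₂, hf, hg, hfg, hK₂⟩ := hX
    set ψ : F₂ ⟶ F := g ≫ φ with hψ
    have hψs : Function.Surjective ψ := hφ.comp hg
    have hgf : ∀ k, g (f k) = 0 := fun k => (hfg (f k)).2 ⟨k, rfl⟩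
    refine ⟨K₂, ModuleCat.of R (LinearMap.ker ψ.hom),
      ModuleCat.ofHom (LinearMap.codRestrict _ f.hom (fun k => by
        show φ (g (f k)) = 0
        rw [hgf k]; simp)),
      ModuleCat.ofHom (LinearMap.restrict g.hom (fun x hx => hx)),
      isFlatMod_ker hF₂ hF ψ.hom hψs, ?_, ?_, ?_, hK₂⟩
    · intro a b hab
      exact hf (congrArg Subtype.val hab)
    · rintro ⟨x, hx⟩
      obtain ⟨u, hu⟩ := hg x
      refine ⟨⟨u, ?_⟩, Subtype.ext hu⟩
      show φ (g u) = 0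
      rw [hu]; exact hx
    · rintro ⟨u, hu⟩
      constructor
      · intro h0
        have : g u = 0 := congrArg Subtype.val h0
        obtain ⟨k, hk⟩ := (hfg u).1 this
        exact ⟨k, Subtype.ext hk⟩
      · rintro ⟨k, hk⟩
        have : u = f k := (congrArg Subtype.val hk).symm
        exact Subtype.ext (by show g u = 0; rw [this, hgf])

open CategoryTheory in
lemma exists_proj_cover : ∀ (n : ℕ) (M : ModuleCat.{0} R), fdLE R n M →
    ∃ (K P : ModuleCat.{0} R) (f : K ⟶ P) (g : P ⟶ M), Projective P ∧
      Function.Injective f ∧ Function.Surjective g ∧ Function.Exact f g ∧ fdLE R n K := by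
  intro n M h
  set P : ModuleCat.{0} R := ModuleCat.of R (↑M →₀ R) with hP
  set π : P ⟶ M := ModuleCat.ofHom (Finsupp.linearCombination R (id : ↑M → ↑M)) with hπ
  have hπs : Function.Surjective π := Finsupp.linearCombination_id_surjective R ↑M
  have hPproj : Projective P := ModuleCat.projective_of_free Finsupp.basisSingleOne
  have hPflat : IsFlatMod R ↑P := isFlatMod_finsupp ↑M
  refine ⟨ModuleCat.of R (LinearMap.ker π.hom), P,
    ModuleCat.ofHom (LinearMap.ker π.hom).subtype, π, hPproj, Subtype.val_injective, hπs,
    ?_, ?_⟩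
  · intro x
    constructor
    · intro hx
      exact ⟨⟨x, hx⟩, rfl⟩
    · rintro ⟨⟨k, hk⟩, rfl⟩
      exact hk
  · -- fdLE R n (ker π)
    cases n with
    | zero => exact isFlatMod_ker hPflat h π.hom hπs
    | succ n =>
      obtain ⟨K', F, f, q, hF, hf, hq, hfq, hK'⟩ := h
      have hqf : ∀ k, q (f k) = 0 := fun k => (hfq (f k)).2 ⟨k, rfl⟩
      -- a linear section candidate of q over the free module P
      choose t ht using hq
      set s : ↑P →ₗ[R] ↑F := Finsupp.linearCombination R (fun m => t m) with hs
      have hqs : ∀ p : ↑P, q (s p) = π p := by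
        intro p
        induction p using Finsupp.induction_linear with
        | zero => simp
        | add a b ha hb => simp [map_add, ha, hb]
        | single m r =>
          show q (s (Finsupp.single m r)) = π (Finsupp.single m r)
          rw [hs, hπ]
          erw [Finsupp.linearCombination_single, Finsupp.linearCombination_single, map_smul, ht]
          rfl
      set Φ : ModuleCat.of R (↑P × ↑K') ⟶ F :=
        ModuleCat.ofHom (LinearMap.coprod s f.hom) with hΦ
      have hΦs : Function.Surjective Φ := by
        intro y
        obtain ⟨p, hp⟩ := hπs (q y)
        have : q (y - s p) = 0 := by
          rw [map_sub, hqs, hp, sub_self]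
        obtain ⟨k, hk⟩ := (hfq (y - s p)).1 this
        exact ⟨(p, k), by show s p + f k = y; rw [hk]; abel⟩
      have hkerΦ : fdLE R n (ModuleCat.of R (LinearMap.ker Φ.hom)) :=
        fdLE_ker n Φ hΦs hF (fdLE_prod hPflat n hK')
      -- ker Φ ≃ₗ ker π
      have e : ↑(ModuleCat.of R (LinearMap.ker Φ.hom)) ≃ₗ[R]
          ↑(ModuleCat.of R (LinearMap.ker π.hom)) := by
        refine LinearEquiv.ofBijective
          (LinearMap.codRestrict _ ((LinearMap.fst R ↑P ↑K').comp (Submodule.subtype _))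
            (fun w => ?_)) ⟨?_, ?_⟩
        · obtain ⟨⟨p, k⟩, hw⟩ := w
          have hw' : s p + f k = 0 := hw
          show π p = 0
          have : q (s p + f k) = 0 := by rw [hw']; simp
          rw [map_add, hqs, hqf] at this
          simpa using this
        · rintro ⟨⟨p₁, k₁⟩, h₁⟩ ⟨⟨p₂, k₂⟩, h₂⟩ hw
          have hp : p₁ = p₂ := congrArg Subtype.val hw
          subst hp
          have h₁' : s p₁ + f k₁ = 0 := h₁
          have h₂' : s p₁ + f k₂ = 0 := h₂
          have : f k₁ = f k₂ := add_left_cancel (h₁'.trans h₂'.symm)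
          exact Subtype.ext (by simp [hf this])
        · rintro ⟨p, hp⟩
          have : q (s p) = 0 := by rw [hqs]; exact hp
          have hneg : -(s p) ∈ LinearMap.range f.hom := by
            rcases (hfq (s p)).1 this with ⟨k, hk⟩
            exact ⟨-k, by rw [map_neg, hk]⟩
          obtain ⟨k, hk⟩ := hneg
          refine ⟨⟨(p, k), ?_⟩, rfl⟩
          show s p + f k = 0
          rw [hk]; abel
      exact fdLE_mono (fdLE_congr e hkerΦ)

lemma subsingleton_iff_of_iso {S : Type} [Ring S] {A B : ModuleCat.{0} S} (e : A ≅ B) :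
    Subsingleton ↑A ↔ Subsingleton ↑B :=
  Equiv.subsingleton_congr ((forget (ModuleCat S)).mapIso e).toEquiv

lemma subsingleton_of_isZero {S : Type} [Ring S] {A : ModuleCat.{0} S} (h : IsZero A) :
    Subsingleton ↑A :=
  subsingleton_of_forall_eq 0 fun y => by
    have : (𝟙 A : A ⟶ A) = 0 := h.eq_of_src _ _
    calc y = (𝟙 A : A ⟶ A) y := rfl
      _ = (0 : A ⟶ A) y := by rw [this]
      _ = 0 := rfl

lemma subsingleton_of_exact {S : Type} [Ring S] {T : ShortComplex (ModuleCat.{0} S)}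
    (hT : T.Exact) (h1 : Subsingleton ↑T.X₁) (h3 : Subsingleton ↑T.X₃) :
    Subsingleton ↑T.X₂ := by
  rw [ShortComplex.moduleCat_exact_iff] at hT
  refine subsingleton_of_forall_eq 0 fun x => ?_
  obtain ⟨x₁, hx₁⟩ := hT x (Subsingleton.elim _ _)
  rw [← hx₁, Subsingleton.elim x₁ 0, map_zero]

section SES

variable {A B C : ModuleCat.{0} R} {f : A ⟶ B} {g : B ⟶ C}

lemma exact_comp_eq_zero (h : Function.Exact f g) : f ≫ g = 0 := by
  ext x
  exact (h (f x)).2 ⟨x, rfl⟩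

/-- Package an exact sequence of modules as a `ShortComplex`. -/
def mkSC (h : Function.Exact f g) : ShortComplex (ModuleCat.{0} R) :=
  ShortComplex.mk f g (exact_comp_eq_zero h)

lemma mkSC_shortExact (hf : Function.Injective f) (hg : Function.Surjective g)
    (h : Function.Exact f g) : (mkSC h).ShortExact where
  exact := by
    rw [ShortComplex.moduleCat_exact_iff]
    intro x hx
    exact (h x).1 hx
  mono_f := (ModuleCat.mono_iff_injective (X := A) (Y := B) f).2 hf
  epi_g := (ModuleCat.epi_iff_surjective (X := B) (Y := C) g).2 hg

end SES

lemma resolution_exactAt_succ {Z : ModuleCat.{0} R} (Q : ProjectiveResolution Z) (n : ℕ) :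
    Q.complex.ExactAt (n + 1) :=
  (quasiIsoAt_iff_exactAt' Q.π (n + 1) (ChainComplex.exactAt_succ_single_obj _ _)).1
    inferInstance

/-- `Ext^{k+1}(M, E) = 0` when `E` is injective. -/
lemma extVanish_succ_of_injective (M E : ModuleCat.{0} R) [Injective E] (k : ℕ) :
    extVanish R (k + 1) M E := by
  let P := ProjectiveResolution.of M
  rw [extVanish, subsingleton_iff_of_iso (P.isoExt (k + 1) E)]
  have hEx : (P.complex.linearYonedaObj ℤ E).ExactAt (k + 1) := by
    rw [HomologicalComplex.exactAt_iff' _ k (k + 1) (k + 2) (by simp) (by simp),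
      ShortComplex.moduleCat_exact_iff]
    intro φ hφ
    have hφ' : P.complex.d (k + 2) (k + 1) ≫ (φ : P.complex.X (k + 1) ⟶ E) = 0 := by
      have := hφ
      rwa [HomologicalComplex.shortComplexFunctor'_obj_g, ChainComplex.linearYonedaObj_d] at this
    have hP : (P.complex.sc' (k + 2) (k + 1) k).Exact :=
      (HomologicalComplex.exactAt_iff' _ (k + 2) (k + 1) k (by simp) (by simp)).1
        (resolution_exactAt_succ P k)
    refine ⟨hP.descToInjective φ hφ', ?_⟩
    have := hP.comp_descToInjective φ hφ'
    rw [HomologicalComplex.shortComplexFunctor'_obj_f, ChainComplex.linearYonedaObj_d]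
    exact this
  exact subsingleton_of_isZero
    ((HomologicalComplex.exactAt_iff_isZero_homology _ _).1 hEx)

section LES

variable {M : ModuleCat.{0} R} (P : ProjectiveResolution M)

/-- Postcomposition morphism on Hom complexes. -/
noncomputable def mapY {A B : ModuleCat.{0} R} (φ : A ⟶ B) :
    P.complex.linearYonedaObj ℤ A ⟶ P.complex.linearYonedaObj ℤ B where
  f i := ((linearYoneda ℤ (ModuleCat.{0} R)).map φ).app (Opposite.op (P.complex.X i))
  comm' i j _ := by
    ext (u : P.complex.X i ⟶ A)
    show P.complex.d j i ≫ (u ≫ φ) = (P.complex.d j i ≫ u) ≫ φ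
    rw [Category.assoc]

lemma extVanish_iff_homology (Y : ModuleCat.{0} R) (k : ℕ) :
    extVanish R k M Y ↔ Subsingleton ↑((P.complex.linearYonedaObj ℤ Y).homology k) :=
  subsingleton_iff_of_iso (P.isoExt k Y)

variable (T : ShortComplex (ModuleCat.{0} R))

/-- The short complex of Hom complexes. -/
noncomputable def homSES : ShortComplex (CochainComplex (ModuleCat ℤ) ℕ) :=
  ShortComplex.mk (mapY P T.f) (mapY P T.g) (by
    ext i (u : P.complex.X i ⟶ T.X₁)
    show (u ≫ T.f) ≫ T.g = 0
    rw [Category.assoc, T.zero, Limits.comp_zero])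

lemma homSES_shortExact (hT : T.ShortExact) : (homSES P T).ShortExact := by
  apply HomologicalComplex.shortExact_of_degreewise_shortExact
  intro i
  haveI := hT.mono_f
  haveI := hT.epi_g
  refine { exact := ?_, mono_f := ?_, epi_g := ?_ }
  · rw [ShortComplex.moduleCat_exact_iff]
    intro v hv
    have hv' : (v : P.complex.X i ⟶ T.X₂) ≫ T.g = 0 := hv
    exact ⟨hT.exact.liftFromProjective v hv', hT.exact.liftFromProjective_comp v hv'⟩
  · rw [ModuleCat.mono_iff_injective]
    intro u₁ u₂ h
    have h' : (u₁ : P.complex.X i ⟶ T.X₁) ≫ T.f = u₂ ≫ T.f := h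
    exact (cancel_mono T.f).1 h'
  · rw [ModuleCat.epi_iff_surjective]
    intro w
    exact ⟨Projective.factorThru w T.g, Projective.factorThru_comp w T.g⟩

end LES

section Shift

variable {K P M : ModuleCat.{0} R}

/-- A chosen projective resolution of `K`. -/
noncomputable def QK (K : ModuleCat.{0} R) : ProjectiveResolution K :=
  ProjectiveResolution.of K

/-- The augmentation of the chosen resolution. -/
noncomputable def epsQ (K : ModuleCat.{0} R) : (QK K).complex.X 0 ⟶ K :=
  (QK K).π.f 0 ≫ (HomologicalComplex.singleObjXSelf (ComplexShape.down ℕ) 0 K).hom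

lemma epsQ_surjective (K : ModuleCat.{0} R) : Function.Surjective (epsQ K) := by
  have : Epi (epsQ K) := by unfold epsQ; exact epi_comp _ _
  exact (ModuleCat.epi_iff_surjective _).1 this

lemma d_comp_epsQ (K : ModuleCat.{0} R) : (QK K).complex.d 1 0 ≫ epsQ K = 0 := by
  rw [epsQ, ← Category.assoc, ProjectiveResolution.complex_d_comp_π_f_zero, Limits.zero_comp]

lemma exact_epsQ (K : ModuleCat.{0} R) (x : (QK K).complex.X 0) (hx : epsQ K x = 0) :
    ∃ u, (QK K).complex.d 1 0 u = x := by
  have h0 : (QK K).π.f 0 x = 0 := by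
    apply (ModuleCat.mono_iff_injective
      ((HomologicalComplex.singleObjXSelf (ComplexShape.down ℕ) 0 K).hom)).1 inferInstance
    rw [map_zero]; exact hx
  exact (ShortComplex.moduleCat_exact_iff _).1 (QK K).exact₀ x h0

/-- The objects of the extended complex. -/
noncomputable def shiftX (K P : ModuleCat.{0} R) : ℕ → ModuleCat.{0} R
  | 0 => P
  | (i+1) => (QK K).complex.X i

/-- The differentials of the extended complex. -/
noncomputable def shiftD (f : K ⟶ P) : ∀ n, shiftX K P (n+1) ⟶ shiftX K P n
  | 0 => epsQ K ≫ f
  | (i+1) => (QK K).complex.d (i+1) i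

lemma shiftsq (f : K ⟶ P) : ∀ n, shiftD f (n+1) ≫ shiftD f n = 0
  | 0 => by
    show (QK K).complex.d 1 0 ≫ epsQ K ≫ f = 0
    rw [← Category.assoc, d_comp_epsQ, Limits.zero_comp]
  | (i+1) => HomologicalComplex.d_comp_d _ _ _ _

/-- The extended complex. -/
noncomputable def shiftC (f : K ⟶ P) : ChainComplex (ModuleCat.{0} R) ℕ :=
  ChainComplex.of (shiftX K P) (shiftD f) (shiftsq f)

lemma shiftC_d (f : K ⟶ P) (n : ℕ) : (shiftC f).d (n+1) n = shiftD f n := by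
  unfold shiftC
  exact ChainComplex.of_d _ _ n

lemma shiftC_d10 (f : K ⟶ P) : (shiftC f).d 1 0 = epsQ K ≫ f := shiftC_d f 0

/-- The extended complex as a projective resolution of `M`. -/
noncomputable def shiftRes (f : K ⟶ P) (g : P ⟶ M) (hP : Projective P)
    (hf : Function.Injective f) (hg : Function.Surjective g) (hfg : Function.Exact f g) :
    ProjectiveResolution M where
  complex := shiftC f
  projective n := by
    cases n with
    | zero => exact hP
    | succ i => exact (inferInstance : Projective ((QK K).complex.X i))
  π := (ChainComplex.toSingle₀Equiv _ M).symm ⟨g, by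
    rw [shiftC_d10]
    exact (Category.assoc (epsQ K) f g).trans (by rw [exact_comp_eq_zero hfg, Limits.comp_zero]; rfl)⟩
  quasiIso := ⟨fun n => by
    cases n with
    | zero =>
      rw [ChainComplex.quasiIsoAt₀_iff, ShortComplex.quasiIso_iff_of_zeros']
      · constructor
        · rw [ShortComplex.moduleCat_exact_iff]
          intro (x : ↑P) hx
          have hx' : g x = 0 := hx
          obtain ⟨k, hk⟩ := (hfg x).1 hx'
          obtain ⟨u, hu⟩ := epsQ_surjective K k
          refine ⟨u, ?_⟩
          show ((shiftC f).d 1 0) u = x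
          rw [shiftC_d10]
          show f (epsQ K u) = x
          rw [hu, hk]
        · rw [ModuleCat.epi_iff_surjective]
          intro y
          obtain ⟨x, hx⟩ := hg y
          exact ⟨x, hx⟩
      · rfl
      · rfl
      · rfl
    | succ n =>
      rw [quasiIsoAt_iff_exactAt']
      · rw [HomologicalComplex.exactAt_iff' _ (n+2) (n+1) n (by simp) (by simp),
          ShortComplex.moduleCat_exact_iff]
        intro x hx
        cases n with
        | zero =>
          have hx' : ((shiftC f).d 1 0) x = 0 := hx
          rw [shiftC_d10] at hx'
          have hε : epsQ K x = 0 := hf (by rw [map_zero]; exact hx')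
          obtain ⟨u, hu⟩ := exact_epsQ K x hε
          refine ⟨u, ?_⟩
          show ((shiftC f).d 2 1) u = x
          rw [shiftC_d f 1]
          exact hu
        | succ n =>
          have hQ : ((QK K).complex.sc' (n+2) (n+1) n).Exact :=
            (HomologicalComplex.exactAt_iff' _ (n+2) (n+1) n (by simp) (by simp)).1
              (resolution_exactAt_succ (QK K) n)
          have hx' : ((shiftC f).d (n+2) (n+1)) x = 0 := hx
          rw [shiftC_d f (n+1)] at hx'
          obtain ⟨u, hu⟩ := (ShortComplex.moduleCat_exact_iff _).1 hQ x hx'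
          refine ⟨u, ?_⟩
          show ((shiftC f).d (n+3) (n+2)) u = x
          rw [shiftC_d f (n+2)]
          exact hu
      · exact ChainComplex.exactAt_succ_single_obj _ _⟩

/-- Dimension shifting: `Ext^{j+1}(K, W) = 0` implies `Ext^{j+2}(M, W) = 0`. -/
lemma ext_shift (f : K ⟶ P) (g : P ⟶ M) (hP : Projective P)
    (hf : Function.Injective f) (hg : Function.Surjective g) (hfg : Function.Exact f g)
    (W : ModuleCat.{0} R) (j : ℕ) (h : extVanish R (j+1) K W) : extVanish R (j+2) M W := by
  have isoSC : (((shiftRes f g hP hf hg hfg).complex.linearYonedaObj ℤ W).sc'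
      (j+1) (j+2) (j+3)) ≅ (((QK K).complex.linearYonedaObj ℤ W).sc' j (j+1) (j+2)) := by
    refine ShortComplex.isoMk (Iso.refl _) (Iso.refl _) (Iso.refl _) ?_ ?_
    · simp only [Iso.refl_hom, Category.id_comp, Category.comp_id,
        HomologicalComplex.shortComplexFunctor'_obj_f]
      show (((QK K).complex.linearYonedaObj ℤ W)).d j (j+1) =
        (((shiftC f).linearYonedaObj ℤ W)).d (j+1) (j+2)
      rw [ChainComplex.linearYonedaObj_d, ChainComplex.linearYonedaObj_d]
      have hd : (shiftC f).d (j+2) (j+1) = shiftD f (j+1) := shiftC_d f (j+1)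
      rw [hd]
      rfl
    · simp only [Iso.refl_hom, Category.id_comp, Category.comp_id,
        HomologicalComplex.shortComplexFunctor'_obj_g]
      show (((QK K).complex.linearYonedaObj ℤ W)).d (j+1) (j+2) =
        (((shiftC f).linearYonedaObj ℤ W)).d (j+2) (j+3)
      rw [ChainComplex.linearYonedaObj_d, ChainComplex.linearYonedaObj_d]
      have hd : (shiftC f).d (j+3) (j+2) = shiftD f (j+2) := shiftC_d f (j+2)
      rw [hd]
      rfl
  refine (subsingleton_iff_of_iso ((shiftRes f g hP hf hg hfg).isoExt (j+2) W)).2 ?_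
  refine (subsingleton_iff_of_iso (HomologicalComplex.homologyIsoSc'
    ((shiftRes f g hP hf hg hfg).complex.linearYonedaObj ℤ W) (j+1) (j+2) (j+3)
    (by simp) (by simp))).2 ?_
  refine (subsingleton_iff_of_iso (ShortComplex.homologyMapIso isoSC)).2 ?_
  refine (subsingleton_iff_of_iso (HomologicalComplex.homologyIsoSc'
    ((QK K).complex.linearYonedaObj ℤ W) j (j+1) (j+2) (by simp) (by simp))).1 ?_
  exact (subsingleton_iff_of_iso ((QK K).isoExt (j+1) W)).1 h

end Shift

section LESCons

variable {N W C' : ModuleCat.{0} R} {f : N ⟶ W} {g : W ⟶ C'}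

lemma extVanish_of_les (hf : Function.Injective f) (hg : Function.Surjective g)
    (hfg : Function.Exact f g) (M : ModuleCat.{0} R) (m : ℕ)
    (h1 : extVanish R (m + 1) M C') (h2 : extVanish R (m + 2) M W) :
    extVanish R (m + 2) M N := by
  let Pr := ProjectiveResolution.of M
  have hσ := homSES_shortExact Pr _ (mkSC_shortExact hf hg hfg)
  have hex := hσ.homology_exact₁ (m + 1) (m + 2) (by simp)
  exact (extVanish_iff_homology Pr N (m + 2)).2
    (subsingleton_of_exact hex
      ((extVanish_iff_homology Pr C' (m + 1)).1 h1)
      ((extVanish_iff_homology Pr W (m + 2)).1 h2))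

lemma extVanish_quotient_of_les (hf : Function.Injective f) (hg : Function.Surjective g)
    (hfg : Function.Exact f g) (M : ModuleCat.{0} R) (m : ℕ)
    (h1 : extVanish R (m + 1) M W) (h2 : extVanish R (m + 2) M N) :
    extVanish R (m + 1) M C' := by
  let Pr := ProjectiveResolution.of M
  have hσ := homSES_shortExact Pr _ (mkSC_shortExact hf hg hfg)
  have hex := hσ.homology_exact₃ (m + 1) (m + 2) (by simp)
  exact (extVanish_iff_homology Pr C' (m + 1)).2
    (subsingleton_of_exact hex
      ((extVanish_iff_homology Pr W (m + 1)).1 h1)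
      ((extVanish_iff_homology Pr N (m + 2)).1 h2))

end LESCons


end Aux2

/-- `W` is `L_n`-injective: `Ext^1_R(M, W) = 0` for every `M` of flat dimension at most `n`. -/
def LnInj (n : ℕ) (W : ModuleCat.{0} R) : Prop :=
  ∀ M : ModuleCat.{0} R, fdLE R n M → extVanish R 1 M W


/-- `N` has `L_n`-injective dimension at most `m`: there is an exact sequence
`0 → N → W_0 → ⋯ → W_m → 0` with all `W_i` `L_n`-injective. -/
def LnidLE (n : ℕ) : ℕ → ModuleCat.{0} R → Prop
  | 0, N => LnInj R n N
  | m+1, N => ∃ (W C : ModuleCat.{0} R) (f : N ⟶ W) (g : W ⟶ C),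
      LnInj R n W ∧ Function.Injective f ∧ Function.Surjective g ∧
        Function.Exact f g ∧ LnidLE n m C


/-- The `L_n`-injective dimension of `N`, as an extended natural number. -/
noncomputable def Lnid (n : ℕ) (N : ModuleCat.{0} R) : ℕ∞ :=
  sInf {k : ℕ∞ | ∃ m : ℕ, k = m ∧ LnidLE R n m N}


section Aux3

variable {R : Type} [Ring R]

/-- If `W` is `L_n`-injective then all higher Ext's against modules of flat dimension
at most `n` vanish. -/
lemma lnInj_extVanish {n : ℕ} {W : ModuleCat.{0} R} (hW : LnInj R n W) :
    ∀ (k : ℕ) (M : ModuleCat.{0} R), fdLE R n M → extVanish R (k + 1) M W := by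
  intro k
  induction k with
  | zero => exact fun M hM => hW M hM
  | succ k ih =>
    intro M hM
    obtain ⟨K, P, fKP, gPM, hP, hfKP, hgPM, hfg, hK⟩ := exists_proj_cover n M hM
    exact ext_shift fKP gPM hP hfKP hgPM hfg W k (ih K hK)


end Aux3

/-- The `L_n`-injective dimension of `N` is at most `m` iff `Ext^{m+1}_R(M, N) = 0`
for every module `M` of flat dimension at most `n`. -/
theorem stmt17 (n m : ℕ) (N : ModuleCat.{0} R) :
    LnidLE R n m N ↔ ∀ M : ModuleCat.{0} R, fdLE R n M → extVanish R (m + 1) M N := by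
  induction m generalizing N with
  | zero =>
    constructor
    · intro h M hM
      exact h M hM
    · intro h M hM
      exact h M hM
  | succ m ih =>
    constructor
    · rintro ⟨W, C', fNW, gWC, hW, hf, hg, hfg, hC⟩ M hM
      exact extVanish_of_les hf hg hfg M m ((ih C').1 hC M hM)
        (lnInj_extVanish hW (m + 1) M hM)
    · intro h
      set E := Injective.under N with hE
      set ι := Injective.ι N with hι
      set C' : ModuleCat.{0} R := Limits.cokernel ι with hC'
      set π : E ⟶ C' := Limits.cokernel.π ι with hπ
      have hexact : Function.Exact ι π := by
        have hzero : ι ≫ π = 0 := Limits.cokernel.condition ι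
        have hex : (ShortComplex.mk ι π hzero).Exact :=
          ShortComplex.exact_of_g_is_cokernel _ (Limits.cokernelIsCokernel ι)
        rw [ShortComplex.moduleCat_exact_iff] at hex
        intro y
        constructor
        · intro hy
          exact hex y hy
        · rintro ⟨x, rfl⟩
          have := congrArg (fun (u : N ⟶ C') => u x) hzero
          simpa using this
      have hinj : Function.Injective ι := (ModuleCat.mono_iff_injective ι).1 inferInstance
      have hsurj : Function.Surjective π := (ModuleCat.epi_iff_surjective π).1 inferInstance
      refine ⟨E, C', ι, π, ?_, hinj, hsurj, hexact, ?_⟩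
      · intro M hM
        exact extVanish_succ_of_injective M E 0
      · refine (ih C').2 fun M hM => ?_
        exact extVanish_quotient_of_les hinj hsurj hexact M m
          (extVanish_succ_of_injective M E m) (h M hM)
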